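/- Define a relation on ℤ/ν (ν = order of ξ in K^×, q a primitive m-th root of unity, d = gcd(m,ν)): t ~ t' iff there exist l ∈ {0,...,m-1} and s ∈ {0,...,n-1} with gcd(s,n) = 1 and ξ^{s·t' - t} = q^l. Then ~ is an equivalence relation. -/

import Mathlib

/-- The relation `t ~ t'` iff there are `l ∈ {0,…,m-1}` and `s ∈ {0,…,n-1}` with
`gcd(s,n) = 1` and `ξ^{s·t' - t} = q^l` (encoding isomorphism of the Hopf algebras
`T^{ξ^t}_{nm²}(q)`) is an equivalence relation. -/
theorem iso_relation_equivalence {K : Type*} [Field K] {m n ν : ℕ}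
    (hn : 2 ≤ n) (hm : 2 ≤ m) {ξ q : K} (hq : IsPrimitiveRoot q m)
    (hξn : ξ ^ n = 1) (hord : orderOf ξ = ν) (hνn : ν ∣ n)
    (hgen : ∀ ω : K, ω ^ n = 1 → ∃ k : ℕ, ω = ξ ^ k) :
    Equivalence (fun t t' : ℤ =>
      ∃ l s : ℕ, l < m ∧ s < n ∧ Nat.Coprime s n ∧ ξ ^ ((s : ℤ) * t' - t) = q ^ l) := by
  have hm0 : m ≠ 0 := by omega
  have hn0 : n ≠ 0 := by omega
  have hξ0 : ξ ≠ 0 := by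
    intro h
    rw [h, zero_pow hn0] at hξn
    exact zero_ne_one hξn
  have hqm : q ^ m = 1 := hq.pow_eq_one
  have hxkey : ∀ a b : ℤ, (n : ℤ) ∣ a - b → ξ ^ a = ξ ^ b := by
    rintro a b ⟨k, hk⟩
    have hab : a = b + n * k := by linarith
    rw [hab, zpow_add₀ hξ0, zpow_mul, zpow_natCast, hξn, one_zpow, mul_one]
  have hqmod : ∀ c : ℕ, q ^ c = q ^ (c % m) := by
    intro c
    conv_lhs => rw [← Nat.div_add_mod c m]
    rw [pow_add, pow_mul, hqm, one_pow, one_mul]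
  have hcopmod : ∀ a : ℕ, Nat.Coprime a n → Nat.Coprime (a % n) n := by
    intro a ha
    have h : Nat.gcd (a % n) n = Nat.gcd n a := (Nat.gcd_rec n a).symm
    unfold Nat.Coprime at ha ⊢
    rw [h, Nat.gcd_comm]
    exact ha
  have hmoddvd : ∀ a : ℕ, (n : ℤ) ∣ ((a % n : ℕ) : ℤ) - (a : ℤ) := by
    intro a
    have h1 : ((a % n : ℕ) : ℤ) = (a : ℤ) % (n : ℤ) := by push_cast; ring
    refine ⟨-((a : ℤ) / n), ?_⟩
    have h2 := Int.mul_ediv_add_emod (a : ℤ) (n : ℤ)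
    rw [h1]; linarith
  constructor
  · intro t
    refine ⟨0, 1, by omega, by omega, Nat.coprime_one_left n, ?_⟩
    simp
  · rintro t t' ⟨l, s, hl, hs, hcop, hx⟩
    obtain ⟨b, -, hb⟩ := Nat.exists_mul_mod_eq_one_of_coprime hcop (by omega)
    set s' := b % n with hs'def
    have hsb : Nat.Coprime (s * b) n := by
      unfold Nat.Coprime
      rw [Nat.gcd_comm, Nat.gcd_rec, hb]
      simp
    have hbcop : Nat.Coprime b n := Nat.Coprime.coprime_dvd_left (dvd_mul_left b s) hsb
    have hs'cop : Nat.Coprime s' n := hcopmod b hbcop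
    have hs'lt : s' < n := Nat.mod_lt b (by omega)
    have hmeq : s * s' ≡ 1 [MOD n] := by
      calc s * (b % n) ≡ s * b [MOD n] := Nat.ModEq.mul_left s (Nat.mod_modEq b n)
        _ ≡ 1 [MOD n] := by
            unfold Nat.ModEq
            rw [hb, Nat.mod_eq_of_lt (by omega)]
    have hdvd : (n : ℤ) ∣ 1 - (s : ℤ) * (s' : ℤ) := by
      have h := hmeq.dvd
      push_cast at h
      exact h
    set c := l * s' with hcdef
    -- raise hx to the power s'
    have h1 : ξ ^ (((s : ℤ) * t' - t) * (s' : ℤ)) = q ^ c := by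
      rw [zpow_mul, hx, zpow_natCast, ← pow_mul]
    have h2 : ξ ^ (t' - (s' : ℤ) * t) = q ^ c := by
      rw [← h1]
      apply hxkey
      have heq : (t' - (s' : ℤ) * t) - ((s : ℤ) * t' - t) * (s' : ℤ)
          = (1 - (s : ℤ) * (s' : ℤ)) * t' + ((1 : ℤ) - (s : ℤ) * (s' : ℤ)) * (-t) * 0
          := by ring
      rw [heq]
      simpa using hdvd.mul_right t'
    refine ⟨(m - c % m) % m, s', Nat.mod_lt _ (by omega), hs'lt, hs'cop, ?_⟩
    have h3 : q ^ c * q ^ ((m - c % m) % m) = 1 := by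
      rw [hqmod c, ← pow_add]
      rcases Nat.eq_zero_or_pos (c % m) with h | h
      · rw [h]; simp
      · have hlt : c % m < m := Nat.mod_lt _ (by omega)
        have e1 : (m - c % m) % m = m - c % m := Nat.mod_eq_of_lt (by omega)
        rw [e1]
        have e2 : c % m + (m - c % m) = m := by omega
        rw [e2, hqm]
    have h4 : ((s' : ℤ) * t - t') = -(t' - (s' : ℤ) * t) := by ring
    rw [h4, zpow_neg, h2]
    exact inv_eq_of_mul_eq_one_right h3
  · rintro t t' t'' ⟨l1, s1, hl1, hs1, hc1, hx1⟩ ⟨l2, s2, hl2, hs2, hc2, hx2⟩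
    refine ⟨(l1 + l2 * s1) % m, (s1 * s2) % n, Nat.mod_lt _ (by omega),
      Nat.mod_lt _ (by omega), hcopmod _ (Nat.Coprime.mul hc1 hc2), ?_⟩
    have h1 : ξ ^ (((s2 : ℤ) * t'' - t') * (s1 : ℤ)) = q ^ (l2 * s1) := by
      rw [zpow_mul, hx2, zpow_natCast, ← pow_mul]
    have h2 : ξ ^ ((s1 : ℤ) * (s2 : ℤ) * t'' - t) = q ^ (l1 + l2 * s1) := by
      have heq : (s1 : ℤ) * (s2 : ℤ) * t'' - t
          = ((s2 : ℤ) * t'' - t') * (s1 : ℤ) + ((s1 : ℤ) * t' - t) := by ring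
      rw [heq, zpow_add₀ hξ0, h1, hx1, ← pow_add]
      ring_nf
    have h3 : ξ ^ (((s1 * s2 % n : ℕ) : ℤ) * t'' - t)
        = ξ ^ ((s1 : ℤ) * (s2 : ℤ) * t'' - t) := by
      apply hxkey
      have heq : (((s1 * s2 % n : ℕ) : ℤ) * t'' - t) - ((s1 : ℤ) * (s2 : ℤ) * t'' - t)
          = (((s1 * s2 % n : ℕ) : ℤ) - ((s1 * s2 : ℕ) : ℤ)) * t'' := by push_cast; ring
      rw [heq]
      exact (hmoddvd (s1 * s2)).mul_right t''
    rw [h3, h2, hqmod (l1 + l2 * s1)]
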